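/- Let p ≥ 2, set k = (p²−p+1)/(4(p−1)), and for t ∈ ℝ define w : {(ξ,y) : ξ ≠ 0} → ℝ³ by w₁ = √(4k/3)·(coth(√k ξ) − (√3 sin t + cos t)/√3)·e^{√(k/3)[(√3 sin t + cos t)ξ + (√3 cos t − sin t)y]}, w₂ = √(4k/3)·(coth(√k ξ) − (cos t − √3 sin t)/√3)·e^{√(k/3)[(cos t − √3 sin t)ξ − (√3 cos t + sin t)y]}, w₃ = −(√(p−1)/p)·√(4k/3)·(coth(√k ξ) + (2/√3)cos t)·e^{√(4k/3)(−ξ cos t + y sin t)}. Then each component of w satisfies ∂²w/∂ξ² + ∂²w/∂y² = 2k·(coth²(√k ξ) − 1/3)·w for all ξ ≠ 0, y ∈ ℝ. -/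

import Mathlib

/-- Real hyperbolic cotangent. -/
noncomputable def coth (x : ℝ) : ℝ := Real.cosh x / Real.sinh x

lemma coth_hasDerivAt {x : ℝ} (hx : Real.sinh x ≠ 0) :
    HasDerivAt coth (1 - coth x ^ 2) x := by
  have h := (Real.hasDerivAt_cosh x).div (Real.hasDerivAt_sinh x) hx
  have hc := Real.cosh_sq_sub_sinh_sq x
  refine h.congr_deriv ?_
  unfold coth
  field_simp

lemma key (k a α β C : ℝ) (hk : 0 < k) (hα : α = -(Real.sqrt k * a))
    (hαβ : α ^ 2 + β ^ 2 = 4 * k / 3) {ξ : ℝ} (hξ : ξ ≠ 0) (y : ℝ) :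
    deriv (deriv fun s => C * (coth (Real.sqrt k * s) + a) * Real.exp (α * s + β * y)) ξ +
      deriv (deriv fun s => C * (coth (Real.sqrt k * ξ) + a) * Real.exp (α * ξ + β * s)) y =
    2 * k * ((coth (Real.sqrt k * ξ)) ^ 2 - 1 / 3) *
      (C * (coth (Real.sqrt k * ξ) + a) * Real.exp (α * ξ + β * y)) := by
  set q := Real.sqrt k with hqdef
  have hq : 0 < q := Real.sqrt_pos.mpr hk
  have hq2 : q ^ 2 = k := Real.sq_sqrt hk.le
  have hu : ∀ s : ℝ, s ≠ 0 →
      HasDerivAt (fun s => coth (q * s)) (q * (1 - coth (q * s) ^ 2)) s := by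
    intro s hs
    have hsin : Real.sinh (q * s) ≠ 0 := Real.sinh_ne_zero.mpr (mul_ne_zero hq.ne' hs)
    have h := (coth_hasDerivAt hsin).comp s ((hasDerivAt_id s).const_mul q)
    refine h.congr_deriv ?_
    · ring
  have hE : ∀ s : ℝ, HasDerivAt (fun s => Real.exp (α * s + β * y))
      (Real.exp (α * s + β * y) * α) s := by
    intro s
    have h := (((hasDerivAt_id s).const_mul α).add_const (β * y)).exp
    refine h.congr_deriv ?_
    simp [id_eq]
  have hF : ∀ s : ℝ, s ≠ 0 → HasDerivAt (fun s => C * (coth (q * s) + a) * Real.exp (α * s + β * y))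
      (C * (q * (1 - coth (q * s) ^ 2) + α * (coth (q * s) + a)) * Real.exp (α * s + β * y)) s := by
    intro s hs
    have h := (((hu s hs).add_const a).const_mul C).mul (hE s)
    refine h.congr_deriv ?_
    ring
  have hev : deriv (fun s => C * (coth (q * s) + a) * Real.exp (α * s + β * y)) =ᶠ[nhds ξ]
      fun s => C * (q * (1 - coth (q * s) ^ 2) + α * (coth (q * s) + a)) * Real.exp (α * s + β * y) := by
    filter_upwards [eventually_ne_nhds hξ] with s hs using (hF s hs).deriv
  set u := coth (q * ξ) with hudef
  set E := Real.exp (α * ξ + β * y) with hEdef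
  have hxx : deriv (deriv fun s => C * (coth (q * s) + a) * Real.exp (α * s + β * y)) ξ =
      C * ((q * (-(2 * u) * (q * (1 - u ^ 2))) + α * (q * (1 - u ^ 2)))
        + (q * (1 - u ^ 2) + α * (u + a)) * α) * E := by
    rw [hev.deriv_eq]
    have h2 : HasDerivAt (fun s => coth (q * s) ^ 2) (2 * u * (q * (1 - u ^ 2))) ξ := by
      have h := (hu ξ hξ).pow 2
      refine h.congr_deriv ?_
      simp [hudef]
    have hin : HasDerivAt (fun s => q * (1 - coth (q * s) ^ 2) + α * (coth (q * s) + a))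
        (q * (-(2 * u) * (q * (1 - u ^ 2))) + α * (q * (1 - u ^ 2))) ξ := by
      have h := (((hasDerivAt_const ξ (1:ℝ)).sub h2).const_mul q).add
        (((hu ξ hξ).add_const a).const_mul α)
      refine h.congr_deriv ?_
      rw [hudef]; ring
    have h := ((hin.const_mul C).mul (hE ξ)).deriv
    erw [h]
    rw [hudef, hEdef]; ring
  have hG : ∀ s : ℝ, HasDerivAt (fun s => C * (u + a) * Real.exp (α * ξ + β * s))
      (C * (u + a) * Real.exp (α * ξ + β * s) * β) s := by
    intro s
    have h := ((((hasDerivAt_id s).const_mul β).const_add (α * ξ)).exp).const_mul (C * (u + a))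
    refine h.congr_deriv ?_
    simp [id_eq]
    ring
  have hyy : deriv (deriv fun s => C * (u + a) * Real.exp (α * ξ + β * s)) y =
      C * (u + a) * E * β * β := by
    have hd : (deriv fun s => C * (u + a) * Real.exp (α * ξ + β * s)) =
        fun s => C * (u + a) * Real.exp (α * ξ + β * s) * β := funext fun s => (hG s).deriv
    rw [hd]
    have h := ((hG y).mul_const β).deriv
    rw [h, hEdef]
  rw [hxx, hyy, hα]
  have hb : β ^ 2 = 4 * k / 3 - q ^ 2 * a ^ 2 := by
    linear_combination hαβ + (q * a - α) * hα
  linear_combination (C * E * (u + a)) * hb +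
    (C * E * (2 * u ^ 3 + 2 * a * u ^ 2 - 2 * u - 2 * a)) * hq2

/-- The associated family `r_λ`, `λ = e^{3it}`, of the complete hyperbolic affine sphere
asymptotic to the cone `{x : 0 ≤ x₂ ≤ x₁^{1/p} x₃^{1/q}}` (Theorem 3.3 of the paper);
here `k = (p²−p+1)/(4(p−1))`. -/
noncomputable def w (p k t ξ y : ℝ) : Fin 3 → ℝ :=
  ![ Real.sqrt (4 * k / 3) *
       (coth (Real.sqrt k * ξ) - (Real.sqrt 3 * Real.sin t + Real.cos t) / Real.sqrt 3) *
       Real.exp (Real.sqrt (k / 3) *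
         ((Real.sqrt 3 * Real.sin t + Real.cos t) * ξ +
          (Real.sqrt 3 * Real.cos t - Real.sin t) * y)),
     Real.sqrt (4 * k / 3) *
       (coth (Real.sqrt k * ξ) - (Real.cos t - Real.sqrt 3 * Real.sin t) / Real.sqrt 3) *
       Real.exp (Real.sqrt (k / 3) *
         ((Real.cos t - Real.sqrt 3 * Real.sin t) * ξ -
          (Real.sqrt 3 * Real.cos t + Real.sin t) * y)),
     -(Real.sqrt (p - 1) / p) * Real.sqrt (4 * k / 3) *
       (coth (Real.sqrt k * ξ) + (2 / Real.sqrt 3) * Real.cos t) *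
       Real.exp (Real.sqrt (4 * k / 3) * (-ξ * Real.cos t + y * Real.sin t)) ]

/-- Every member of the associated family satisfies the affine-sphere equation
`Δ w = 2k (coth²(√k ξ) − 1/3) w` componentwise. -/
theorem associated_family_laplace (p : ℝ) (hp : 2 ≤ p)
    (k : ℝ) (hk : k = (p ^ 2 - p + 1) / (4 * (p - 1))) (t : ℝ) :
    ∀ ξ : ℝ, ξ ≠ 0 → ∀ y : ℝ, ∀ i : Fin 3,
      deriv (deriv fun s => w p k t s y i) ξ + deriv (deriv fun s => w p k t ξ s i) y
        = 2 * k * ((coth (Real.sqrt k * ξ)) ^ 2 - 1 / 3) * w p k t ξ y i := by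
  intro ξ hξ y i
  have hkpos : 0 < k := by
    rw [hk]
    apply div_pos (by nlinarith) (by nlinarith)
  have h3pos : (0:ℝ) < Real.sqrt 3 := Real.sqrt_pos.mpr (by norm_num)
  have h3sq : Real.sqrt 3 ^ 2 = 3 := Real.sq_sqrt (by norm_num)
  have hk3 : Real.sqrt (k / 3) = Real.sqrt k / Real.sqrt 3 := Real.sqrt_div hkpos.le 3
  have hk32 : Real.sqrt (k / 3) ^ 2 = k / 3 := Real.sq_sqrt (by positivity)
  have hk432 : Real.sqrt (4 * k / 3) ^ 2 = 4 * k / 3 := Real.sq_sqrt (by positivity)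
  have hk43 : Real.sqrt (4 * k / 3) = 2 * Real.sqrt k / Real.sqrt 3 := by
    rw [show (4 * k / 3 : ℝ) = 4 * (k / 3) by ring, Real.sqrt_mul (by norm_num) (k / 3),
      show (4:ℝ) = 2 ^ 2 by norm_num, Real.sqrt_sq (by norm_num), hk3]
    ring
  have hsc : Real.sin t ^ 2 + Real.cos t ^ 2 = 1 := Real.sin_sq_add_cos_sq t
  fin_cases i
  · -- component 0
    show deriv (deriv fun s => w p k t s y 0) ξ + deriv (deriv fun s => w p k t ξ s 0) y
        = 2 * k * ((coth (Real.sqrt k * ξ)) ^ 2 - 1 / 3) * w p k t ξ y 0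
    set C := Real.sqrt (4 * k / 3)
    set a := -((Real.sqrt 3 * Real.sin t + Real.cos t) / Real.sqrt 3) with ha
    set α := Real.sqrt (k / 3) * (Real.sqrt 3 * Real.sin t + Real.cos t) with hα'
    set β := Real.sqrt (k / 3) * (Real.sqrt 3 * Real.cos t - Real.sin t) with hβ'
    have hfun : ∀ u v : ℝ, w p k t u v 0 =
        C * (coth (Real.sqrt k * u) + a) * Real.exp (α * u + β * v) := by
      intro u v
      show C * (coth (Real.sqrt k * u) - (Real.sqrt 3 * Real.sin t + Real.cos t) / Real.sqrt 3) *
        Real.exp (Real.sqrt (k / 3) * ((Real.sqrt 3 * Real.sin t + Real.cos t) * u +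
          (Real.sqrt 3 * Real.cos t - Real.sin t) * v)) = _
      rw [ha, hα', hβ', sub_eq_add_neg,
        show Real.sqrt (k / 3) * ((Real.sqrt 3 * Real.sin t + Real.cos t) * u +
          (Real.sqrt 3 * Real.cos t - Real.sin t) * v)
          = Real.sqrt (k / 3) * (Real.sqrt 3 * Real.sin t + Real.cos t) * u +
            Real.sqrt (k / 3) * (Real.sqrt 3 * Real.cos t - Real.sin t) * v by ring]
    have h1 : (fun s => w p k t s y 0) =
        fun s => C * (coth (Real.sqrt k * s) + a) * Real.exp (α * s + β * y) :=
      funext fun s => hfun s y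
    have h2 : (fun s => w p k t ξ s 0) =
        fun s => C * (coth (Real.sqrt k * ξ) + a) * Real.exp (α * ξ + β * s) :=
      funext fun s => hfun ξ s
    rw [h1, h2, hfun ξ y]
    apply key k a α β C hkpos _ _ hξ y
    · rw [hα', ha, hk3]; field_simp
    · rw [hα', hβ']
      linear_combination ((Real.sqrt 3 ^ 2 + 1) * (Real.sin t ^ 2 + Real.cos t ^ 2)) * hk32 +
        (k / 3) * (Real.sin t ^ 2 + Real.cos t ^ 2) * h3sq + (4 * k / 3) * hsc
  · -- component 1
    show deriv (deriv fun s => w p k t s y 1) ξ + deriv (deriv fun s => w p k t ξ s 1) y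
        = 2 * k * ((coth (Real.sqrt k * ξ)) ^ 2 - 1 / 3) * w p k t ξ y 1
    set C := Real.sqrt (4 * k / 3)
    set a := -((Real.cos t - Real.sqrt 3 * Real.sin t) / Real.sqrt 3) with ha
    set α := Real.sqrt (k / 3) * (Real.cos t - Real.sqrt 3 * Real.sin t) with hα'
    set β := Real.sqrt (k / 3) * (-(Real.sqrt 3 * Real.cos t + Real.sin t)) with hβ'
    have hfun : ∀ u v : ℝ, w p k t u v 1 =
        C * (coth (Real.sqrt k * u) + a) * Real.exp (α * u + β * v) := by
      intro u v
      show C * (coth (Real.sqrt k * u) - (Real.cos t - Real.sqrt 3 * Real.sin t) / Real.sqrt 3) *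
        Real.exp (Real.sqrt (k / 3) * ((Real.cos t - Real.sqrt 3 * Real.sin t) * u -
          (Real.sqrt 3 * Real.cos t + Real.sin t) * v)) = _
      rw [ha, hα', hβ', sub_eq_add_neg,
        show Real.sqrt (k / 3) * ((Real.cos t - Real.sqrt 3 * Real.sin t) * u -
          (Real.sqrt 3 * Real.cos t + Real.sin t) * v)
          = Real.sqrt (k / 3) * (Real.cos t - Real.sqrt 3 * Real.sin t) * u +
            Real.sqrt (k / 3) * (-(Real.sqrt 3 * Real.cos t + Real.sin t)) * v by ring]
    have h1 : (fun s => w p k t s y 1) =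
        fun s => C * (coth (Real.sqrt k * s) + a) * Real.exp (α * s + β * y) :=
      funext fun s => hfun s y
    have h2 : (fun s => w p k t ξ s 1) =
        fun s => C * (coth (Real.sqrt k * ξ) + a) * Real.exp (α * ξ + β * s) :=
      funext fun s => hfun ξ s
    rw [h1, h2, hfun ξ y]
    apply key k a α β C hkpos _ _ hξ y
    · rw [hα', ha, hk3]; field_simp
    · rw [hα', hβ']
      linear_combination ((Real.sqrt 3 ^ 2 + 1) * (Real.sin t ^ 2 + Real.cos t ^ 2)) * hk32 +
        (k / 3) * (Real.sin t ^ 2 + Real.cos t ^ 2) * h3sq + (4 * k / 3) * hsc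
  · -- component 2
    show deriv (deriv fun s => w p k t s y 2) ξ + deriv (deriv fun s => w p k t ξ s 2) y
        = 2 * k * ((coth (Real.sqrt k * ξ)) ^ 2 - 1 / 3) * w p k t ξ y 2
    set C := -(Real.sqrt (p - 1) / p) * Real.sqrt (4 * k / 3) with hC
    set a := (2 / Real.sqrt 3) * Real.cos t with ha
    set α := Real.sqrt (4 * k / 3) * (-Real.cos t) with hα'
    set β := Real.sqrt (4 * k / 3) * Real.sin t with hβ'
    have hfun : ∀ u v : ℝ, w p k t u v 2 =
        C * (coth (Real.sqrt k * u) + a) * Real.exp (α * u + β * v) := by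
      intro u v
      show -(Real.sqrt (p - 1) / p) * Real.sqrt (4 * k / 3) *
        (coth (Real.sqrt k * u) + (2 / Real.sqrt 3) * Real.cos t) *
        Real.exp (Real.sqrt (4 * k / 3) * (-u * Real.cos t + v * Real.sin t)) = _
      rw [hC, ha, hα', hβ',
        show Real.sqrt (4 * k / 3) * (-u * Real.cos t + v * Real.sin t)
          = Real.sqrt (4 * k / 3) * (-Real.cos t) * u + Real.sqrt (4 * k / 3) * Real.sin t * v
          by ring]
    have h1 : (fun s => w p k t s y 2) =
        fun s => C * (coth (Real.sqrt k * s) + a) * Real.exp (α * s + β * y) :=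
      funext fun s => hfun s y
    have h2 : (fun s => w p k t ξ s 2) =
        fun s => C * (coth (Real.sqrt k * ξ) + a) * Real.exp (α * ξ + β * s) :=
      funext fun s => hfun ξ s
    rw [h1, h2, hfun ξ y]
    apply key k a α β C hkpos _ _ hξ y
    · rw [hα', ha, hk43]; field_simp
    · rw [hα', hβ']
      linear_combination (Real.sin t ^ 2 + Real.cos t ^ 2) * hk432 + (4 * k / 3) * hsc
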